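/- Let M be a J×K real matrix of rank R, partitioned as a 3×2 block matrix with blocks M11, M12 (top row), M21, M22 (middle row), M33, M32 (bottom row), where the observed submatrices are M1 = [M11; M21] and M2 = [M22; M32] sharing the middle block rows. If rank(M1) = rank(M21) = rank([M21 M22]) = rank(M22) = rank(M2) = R, then the column space of M equals the column space of M1 (equivalently, col(M) is uniquely determined by the observed blocks). -/

import Mathlib

open Matrix

section helpers

variable {K : Type*} [Field K] {m n p q : Type*} [Fintype m] [Fintype n] [Fintype p] [Fintype q]

lemma my_exists_factor [DecidableEq p] (A : Matrix m n K) (B : Matrix m p K)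
    (h : LinearMap.range B.mulVecLin ≤ LinearMap.range A.mulVecLin) :
    ∃ W : Matrix n p K, B = A * W := by
  have hmem : ∀ j : p, (Bᵀ j) ∈ LinearMap.range A.mulVecLin := by
    intro j
    exact h ⟨Pi.single j 1, by rw [Matrix.mulVecLin_apply, Matrix.mulVec_single_one]; rfl⟩
  choose w hw using hmem
  refine ⟨Matrix.of fun k j => w j k, ?_⟩
  ext i j
  have := congrFun (hw j) i
  simp only [Matrix.mulVecLin_apply, Matrix.mulVec, dotProduct, Matrix.transpose_apply] at this
  simp [Matrix.mul_apply, ← this]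

lemma my_submatrix_id_eq [DecidableEq n] (A : Matrix m n K) (g : p → n) :
    A.submatrix id g = A * (1 : Matrix n n K).submatrix id g := by
  ext i j
  simp [Matrix.mul_apply, Matrix.one_apply]

lemma my_range_submatrix_le [DecidableEq n] (A : Matrix m n K) (g : p → n) :
    LinearMap.range (A.submatrix id g).mulVecLin ≤ LinearMap.range A.mulVecLin := by
  rw [my_submatrix_id_eq A g, Matrix.mulVecLin_mul]
  exact LinearMap.range_comp_le_range _ _

lemma my_colSpace_submatrix_eq [DecidableEq n] (A : Matrix m n K) (g : p → n)
    (h : (A.submatrix id g).rank = A.rank) :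
    LinearMap.range (A.submatrix id g).mulVecLin = LinearMap.range A.mulVecLin :=
  Submodule.eq_of_le_of_finrank_eq (my_range_submatrix_le A g) h

lemma my_cols_factor [DecidableEq n] (A : Matrix m n K) (g1 : p → n) (g2 : q → n)
    (h1 : (A.submatrix id g1).rank = A.rank) :
    ∃ W : Matrix p q K, A.submatrix id g2 = A.submatrix id g1 * W := by
  haveI := Classical.decEq q
  exact my_exists_factor _ _ (by
    rw [my_colSpace_submatrix_eq A g1 h1]
    exact my_range_submatrix_le A g2)

lemma my_mul_submatrix (X : Matrix m n K) (Y : Matrix n p K) (g : q → p) :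
    (X * Y).submatrix id g = X * (Y.submatrix id g) := by
  ext i j
  simp [Matrix.mul_apply]

/-- If the rows indexed by `em` have full rank, every row-submatrix factors through them. -/
lemma my_rows_factor {I : Type*} [Fintype I] [DecidableEq m] [DecidableEq I]
    (N : Matrix m n K) {r : ℕ} (hN : N.rank = r)
    (em : p → m) (hmid : (N.submatrix em id).rank = r)
    (e : I → m) :
    ∃ L : Matrix I p K, N.submatrix e id = L * N.submatrix em id := by
  have hTm : (Nᵀ.submatrix id em).rank = Nᵀ.rank := by
    rw [Matrix.rank_transpose, hN, ← Matrix.transpose_submatrix, Matrix.rank_transpose, hmid]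
  obtain ⟨Wt, hWt⟩ := my_cols_factor Nᵀ em e hTm
  refine ⟨Wtᵀ, ?_⟩
  have := congrArg Matrix.transpose hWt
  rw [Matrix.transpose_mul, ← Matrix.transpose_submatrix, ← Matrix.transpose_submatrix,
    Matrix.transpose_transpose, Matrix.transpose_transpose] at this
  exact this

end helpers

/-- If the two observed overlapping submatrices of a rank-`R` block matrix
satisfy the rank-overlap conditions, then the column space of the matrix is uniquely
determined by the observed blocks: any two rank-`R` matrices agreeing on the observed
blocks have the same column space. -/
theorem stmt0 (J1 J2 J3 K1 K2 R : ℕ)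
    (M M' : Matrix (Fin J1 ⊕ Fin J2 ⊕ Fin J3) (Fin K1 ⊕ Fin K2) ℝ)
    (hM : M.rank = R) (hM' : M'.rank = R)
    -- rank conditions on the observed submatrices of M
    (hM1 : (Matrix.of fun (i : Fin J1 ⊕ Fin J2) (j : Fin K1) =>
      M (Sum.elim Sum.inl (Sum.inr ∘ Sum.inl) i) (Sum.inl j)).rank = R)
    (hM21 : (Matrix.of fun (i : Fin J2) (j : Fin K1) =>
      M (Sum.inr (Sum.inl i)) (Sum.inl j)).rank = R)
    (hM2122 : (Matrix.of fun (i : Fin J2) (j : Fin K1 ⊕ Fin K2) =>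
      M (Sum.inr (Sum.inl i)) j).rank = R)
    (hM22 : (Matrix.of fun (i : Fin J2) (j : Fin K2) =>
      M (Sum.inr (Sum.inl i)) (Sum.inr j)).rank = R)
    (hM2 : (Matrix.of fun (i : Fin J2 ⊕ Fin J3) (j : Fin K2) =>
      M (Sum.inr i) (Sum.inr j)).rank = R)
    -- M and M' agree on the observed blocks
    (hobs11 : ∀ (i : Fin J1) (j : Fin K1), M (Sum.inl i) (Sum.inl j) = M' (Sum.inl i) (Sum.inl j))
    (hobs21 : ∀ (i : Fin J2) (j : Fin K1),
      M (Sum.inr (Sum.inl i)) (Sum.inl j) = M' (Sum.inr (Sum.inl i)) (Sum.inl j))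
    (hobs22 : ∀ (i : Fin J2) (j : Fin K2),
      M (Sum.inr (Sum.inl i)) (Sum.inr j) = M' (Sum.inr (Sum.inl i)) (Sum.inr j))
    (hobs32 : ∀ (i : Fin J3) (j : Fin K2),
      M (Sum.inr (Sum.inr i)) (Sum.inr j) = M' (Sum.inr (Sum.inr i)) (Sum.inr j)) :
    LinearMap.range M.mulVecLin = LinearMap.range M'.mulVecLin := by
  classical
  suffices hMM : M = M' by rw [hMM]
  set eMid : Fin J2 → (Fin J1 ⊕ Fin J2 ⊕ Fin J3) := fun i => Sum.inr (Sum.inl i) with heMid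
  -- the middle-row submatrices of M and M' agree
  have hmid' : M'.submatrix eMid id = M.submatrix eMid id := by
    ext i j
    cases j with
    | inl j => exact (hobs21 i j).symm
    | inr j => exact (hobs22 i j).symm
  have hmidrank : (M.submatrix eMid id).rank = R := hM2122
  have hmidrank' : (M'.submatrix eMid id).rank = R := by rw [hmid']; exact hM2122
  -- column factorizations within the middle rows
  have h21 : ((M.submatrix eMid id).submatrix id (Sum.inl : Fin K1 → _)).rank
      = (M.submatrix eMid id).rank := by
    rw [hmidrank]; exact hM21
  have h22 : ((M.submatrix eMid id).submatrix id (Sum.inr : Fin K2 → _)).rank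
      = (M.submatrix eMid id).rank := by
    rw [hmidrank]; exact hM22
  obtain ⟨W, hW⟩ := my_cols_factor (M.submatrix eMid id)
      (Sum.inl : Fin K1 → _) (Sum.inr : Fin K2 → _) h21
  obtain ⟨Z, hZ⟩ := my_cols_factor (M.submatrix eMid id)
      (Sum.inr : Fin K2 → _) (Sum.inl : Fin K1 → _) h22
  -- row factorizations through the middle rows, for M and M'
  obtain ⟨A, hA⟩ := my_rows_factor M hM eMid hmidrank (Sum.inl : Fin J1 → _)
  obtain ⟨C, hC⟩ := my_rows_factor M hM eMid hmidrank
      (fun i : Fin J3 => Sum.inr (Sum.inr i))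
  obtain ⟨A', hA'⟩ := my_rows_factor M' hM' eMid hmidrank' (Sum.inl : Fin J1 → _)
  obtain ⟨C', hC'⟩ := my_rows_factor M' hM' eMid hmidrank'
      (fun i : Fin J3 => Sum.inr (Sum.inr i))
  -- flatten composed submatrices
  simp only [Matrix.submatrix_submatrix, Function.comp_id, Function.id_comp] at hW hZ
  have hmid1 : M'.submatrix eMid (Sum.inl : Fin K1 → _) = M.submatrix eMid Sum.inl := by
    ext i j; exact (hobs21 i j).symm
  have hmid2 : M'.submatrix eMid (Sum.inr : Fin K2 → _) = M.submatrix eMid Sum.inr := by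
    ext i j; exact (hobs22 i j).symm
  -- block identities extracted by restricting columns
  have hA1 := congrArg (fun X => X.submatrix id (Sum.inl : Fin K1 → _)) hA
  have hA2 := congrArg (fun X => X.submatrix id (Sum.inr : Fin K2 → _)) hA
  have hA1' := congrArg (fun X => X.submatrix id (Sum.inl : Fin K1 → _)) hA'
  have hA2' := congrArg (fun X => X.submatrix id (Sum.inr : Fin K2 → _)) hA'
  have hC1 := congrArg (fun X => X.submatrix id (Sum.inl : Fin K1 → _)) hC
  have hC2 := congrArg (fun X => X.submatrix id (Sum.inr : Fin K2 → _)) hC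
  have hC1' := congrArg (fun X => X.submatrix id (Sum.inl : Fin K1 → _)) hC'
  have hC2' := congrArg (fun X => X.submatrix id (Sum.inr : Fin K2 → _)) hC'
  simp only [my_mul_submatrix, Matrix.submatrix_submatrix, Function.comp_id, Function.id_comp]
    at hA1 hA2 hA1' hA2' hC1 hC2 hC1' hC2'
  rw [hmid1] at hA1' hC1'
  rw [hmid2] at hA2' hC2'
  -- M12 = A * M22 = A * (M21 * W) = M11 * W, and similarly for M'
  have hM12 : M.submatrix (Sum.inl : Fin J1 → _) (Sum.inr : Fin K2 → _)
      = M.submatrix (Sum.inl : Fin J1 → _) (Sum.inl : Fin K1 → _) * W := by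
    rw [hA2, hW, ← Matrix.mul_assoc, ← hA1]
  have hM12' : M'.submatrix (Sum.inl : Fin J1 → _) (Sum.inr : Fin K2 → _)
      = M'.submatrix (Sum.inl : Fin J1 → _) (Sum.inl : Fin K1 → _) * W := by
    rw [hA2', hW, ← Matrix.mul_assoc, ← hA1']
  have hM33 : M.submatrix (fun i : Fin J3 => Sum.inr (Sum.inr i)) (Sum.inl : Fin K1 → _)
      = M.submatrix (fun i : Fin J3 => Sum.inr (Sum.inr i)) (Sum.inr : Fin K2 → _) * Z := by
    rw [hC1, hZ, ← Matrix.mul_assoc, ← hC2]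
  have hM33' : M'.submatrix (fun i : Fin J3 => Sum.inr (Sum.inr i)) (Sum.inl : Fin K1 → _)
      = M'.submatrix (fun i : Fin J3 => Sum.inr (Sum.inr i)) (Sum.inr : Fin K2 → _) * Z := by
    rw [hC1', hZ, ← Matrix.mul_assoc, ← hC2']
  -- the unobserved blocks agree
  have h11 : M.submatrix (Sum.inl : Fin J1 → _) (Sum.inl : Fin K1 → _)
      = M'.submatrix (Sum.inl : Fin J1 → _) (Sum.inl : Fin K1 → _) := by
    ext i j; exact hobs11 i j
  have h32 : M.submatrix (fun i : Fin J3 => Sum.inr (Sum.inr i)) (Sum.inr : Fin K2 → _)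
      = M'.submatrix (fun i : Fin J3 => Sum.inr (Sum.inr i)) (Sum.inr : Fin K2 → _) := by
    ext i j; exact hobs32 i j
  have h12 : ∀ (i : Fin J1) (j : Fin K2),
      M (Sum.inl i) (Sum.inr j) = M' (Sum.inl i) (Sum.inr j) := by
    intro i j
    have := congrFun (congrFun (hM12.trans (by rw [h11, ← hM12'])) i) j
    exact this
  have h33 : ∀ (i : Fin J3) (j : Fin K1),
      M (Sum.inr (Sum.inr i)) (Sum.inl j) = M' (Sum.inr (Sum.inr i)) (Sum.inl j) := by
    intro i j
    have := congrFun (congrFun (hM33.trans (by rw [h32, ← hM33'])) i) j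
    exact this
  ext i j
  cases i with
  | inl i =>
    cases j with
    | inl j => exact hobs11 i j
    | inr j => exact h12 i j
  | inr i =>
    cases i with
    | inl i =>
      cases j with
      | inl j => exact hobs21 i j
      | inr j => exact hobs22 i j
    | inr i =>
      cases j with
      | inl j => exact h33 i j
      | inr j => exact hobs32 i j
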